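/- Let π_θ be a compatible family of PDFs on ℝ that integrates to 1 for all θ and allows exchange of derivative and integral over each of (-∞, α], (α, β), and [β, ∞). Then E_u[ψ̄(u)] = 0, where ψ̄ is the CAPG score: ∇_θ log Π_θ(α) on (-∞, α], ∇_θ log π_θ(u) on (α, β), and ∇_θ log(1-Π_θ(β)) on [β, ∞). -/

import Mathlib

open MeasureTheory Set

/-- the CAPG score has zero mean: `E_u[ψ̄(u)] = 0`, where `ψ̄` equals
`∇_θ log Π_θ(α)` on `(-∞, α]`, `∇_θ log p_θ(u)` on `(α, β)`, and
`∇_θ log (1 - Π_θ(β))` on `[β, ∞)`. -/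
theorem capg_score_zero_mean
    (p : ℝ → ℝ → ℝ) (p' ψ ψbar : ℝ → ℝ) (θ α β cA cB : ℝ) (hαβ : α < β)
    (hpdf : ∀ t, ∫ u, p t u = 1) (hnn : ∀ t u, 0 ≤ p t u)
    (hp' : ∀ u, HasDerivAt (fun t => p t u) (p' u) θ)
    (hψ : ∀ u, HasDerivAt (fun t => Real.log (p t u)) (ψ u) θ)
    (hswapA : HasDerivAt (fun t => ∫ u in Iic α, p t u) (∫ u in Iic α, p' u) θ)
    (hswapM : HasDerivAt (fun t => ∫ u in Ioo α β, p t u) (∫ u in Ioo α β, p' u) θ)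
    (hswapB : HasDerivAt (fun t => ∫ u in Ici β, p t u) (∫ u in Ici β, p' u) θ)
    (hposA : 0 < ∫ u in Iic α, p θ u)
    (hle : (∫ u in Iic α, p θ u) ≤ ∫ u in Iic β, p θ u)
    (hltB : (∫ u in Iic β, p θ u) < 1)
    (hcA : HasDerivAt (fun t => Real.log (∫ u in Iic α, p t u)) cA θ)
    (hcB : HasDerivAt (fun t => Real.log (1 - ∫ u in Iic β, p t u)) cB θ)
    (hψbar : ∀ u, ψbar u = if u ≤ α then cA else if u < β then ψ u else cB)
    (hint : Integrable (fun u => ψbar u * p θ u)) :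
    ∫ u, ψbar u * p θ u = 0 := by

  -- p t is integrable for every t
  have hPint : ∀ t, Integrable (p t) := by
    intro t
    by_contra h
    have := hpdf t
    rw [integral_undef h] at this
    norm_num at this
  -- pointwise: ψ u * p θ u = p' u
  have hkey : ∀ u, ψ u * p θ u = p' u := by
    intro u
    rcases eq_or_lt_of_le (hnn θ u) with h0 | h0
    · have hmin : IsLocalMin (fun t => p t u) θ :=
        Filter.Eventually.of_forall (fun t => by show p θ u ≤ p t u; rw [← h0]; exact hnn t u)
      have hz : p' u = 0 := hmin.hasDerivAt_eq_zero (hp' u)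
      rw [← h0, hz, mul_zero]
    · have hlog := (hp' u).log (ne_of_gt h0)
      have := (hψ u).unique hlog
      rw [this]
      field_simp
  -- values of the set integrals of p θ
  set PA := ∫ u in Iic α, p θ u with hPA
  set PB := ∫ u in Iic β, p θ u with hPB
  have hsplitB : ∀ t, (∫ u in Iic β, p t u) = (∫ u in Iic α, p t u) + ∫ u in Ioo α β, p t u := by
    intro t
    rw [← MeasureTheory.integral_Ioc_eq_integral_Ioo, ← setIntegral_union (Set.Iic_disjoint_Ioc le_rfl) measurableSet_Ioc ((hPint t).integrableOn) ((hPint t).integrableOn), Set.Iic_union_Ioc_eq_Iic hαβ.le]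
  -- cA * PA = ∫ p' on Iic α
  have hA : cA * PA = ∫ u in Iic α, p' u := by
    have := hcA.unique (hswapA.log (ne_of_gt hposA))
    rw [this, hPA]
    field_simp
    exact mul_div_cancel_right₀ _ (ne_of_gt hposA)
  -- derivative of t ↦ ∫ Iic β p t
  have hswapB' : HasDerivAt (fun t => ∫ u in Iic β, p t u) ((∫ u in Iic α, p' u) + ∫ u in Ioo α β, p' u) θ := by
    have : (fun t => ∫ u in Iic β, p t u) = fun t => (∫ u in Iic α, p t u) + ∫ u in Ioo α β, p t u := funext hsplitB
    rw [this]
    exact hswapA.add hswapM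
  have hB1 : (0:ℝ) < 1 - PB := by linarith
  have hB : cB * (1 - PB) = -((∫ u in Iic α, p' u) + ∫ u in Ioo α β, p' u) := by
    have hd : HasDerivAt (fun t => 1 - ∫ u in Iic β, p t u) (-((∫ u in Iic α, p' u) + ∫ u in Ioo α β, p' u)) θ := hswapB'.const_sub 1
    have := hcB.unique (hd.log (ne_of_gt hB1))
    rw [this]
    field_simp
    exact congrArg Neg.neg (mul_div_cancel_right₀ _ (ne_of_gt hB1))
  -- total mass split: ∫ Ici β p θ = 1 - PB
  have hIci : (∫ u in Ici β, p θ u) = 1 - PB := by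
    have h1 : (∫ u in Iic β, p θ u) + ∫ u in Ioi β, p θ u = 1 := by
      rw [← setIntegral_union (Set.Iic_disjoint_Ioi le_rfl) measurableSet_Ioi ((hPint θ).integrableOn) ((hPint θ).integrableOn), Set.Iic_union_Ioi, MeasureTheory.setIntegral_univ]
      exact hpdf θ
    rw [MeasureTheory.integral_Ici_eq_integral_Ioi]
    rw [← hPB] at h1
    linarith
  have hmain : (∫ u, ψbar u * p θ u) = (∫ u in Iic α, ψbar u * p θ u) + (∫ u in Ioo α β, ψbar u * p θ u) + ∫ u in Ici β, ψbar u * p θ u := by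
    have hd : Disjoint (Ioo α β) (Ici β) := by
      rw [Set.disjoint_left]
      intro x hx hx2
      exact absurd hx.2 (not_lt.mpr hx2)
    have h2 : (∫ u in Ioi α, ψbar u * p θ u) = (∫ u in Ioo α β, ψbar u * p θ u) + ∫ u in Ici β, ψbar u * p θ u := by
      rw [← setIntegral_union hd measurableSet_Ici hint.integrableOn hint.integrableOn, Set.Ioo_union_Ici_eq_Ioi hαβ]
    rw [add_assoc, ← h2, ← setIntegral_union (Set.Iic_disjoint_Ioi le_rfl) measurableSet_Ioi hint.integrableOn hint.integrableOn, Set.Iic_union_Ioi, MeasureTheory.setIntegral_univ]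
  have hIA : (∫ u in Iic α, ψbar u * p θ u) = cA * PA := by
    rw [show (∫ u in Iic α, ψbar u * p θ u) = ∫ u in Iic α, cA * p θ u from
      setIntegral_congr_fun measurableSet_Iic (fun u hu => by
        have h : u ≤ α := hu
        show ψbar u * p θ u = cA * p θ u
        simp [hψbar u, h]),
      MeasureTheory.integral_const_mul]
  have hIM : (∫ u in Ioo α β, ψbar u * p θ u) = ∫ u in Ioo α β, p' u := by
    apply setIntegral_congr_fun measurableSet_Ioo
    intro u hu
    show ψbar u * p θ u = p' u
    rw [hψbar u, if_neg (not_le.mpr hu.1), if_pos hu.2]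
    exact hkey u
  have hIB : (∫ u in Ici β, ψbar u * p θ u) = cB * (1 - PB) := by
    rw [show (∫ u in Ici β, ψbar u * p θ u) = ∫ u in Ici β, cB * p θ u from
      setIntegral_congr_fun measurableSet_Ici (fun u hu => by
        have h : β ≤ u := hu
        show ψbar u * p θ u = cB * p θ u
        rw [hψbar u, if_neg (by linarith), if_neg (not_lt.mpr h)]),
      MeasureTheory.integral_const_mul, hIci]
  rw [hmain, hIA, hIM, hIB, hA, hB]
  ring
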